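/- Let A = A_C(Λ) be a non-degenerate code algebra, and assume it is NOT the case that C = {𝟎, 𝟏, α, α^c} with |α| = 1 and a_{i,α} = 1 for the unique i ∈ supp(α). Then A admits a Frobenius form if and only if there exist constants λ₁, …, λₙ ∈ 𝔽, not all zero, such that: (1) for each α ∈ C*, the quantity λ_α := (c_{i,α}/a_{i,α})·λ_i is independent of the choice of i ∈ supp(α); and (2) b_{α,β}·λ_γ = b_{α,γ}·λ_β = b_{β,γ}·λ_α whenever α, β, γ ∈ C* satisfy α + β = γ. Moreover, when a Frobenius form exists it is uniquely determined by the λ_i and is given by (t_i, t_j) = δ_{ij} λ_i, (t_i, e^α) = 0, and (e^α, e^β) = δ_{α,β} λ_α. -/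

import Mathlib

abbrev Word (n : ℕ) := Fin n → ZMod 2

def wsupp {n : ℕ} (α : Word n) : Finset (Fin n) :=
  Finset.univ.filter fun i => α i = 1

def dotW {n : ℕ} (u v : Word n) : ZMod 2 := ∑ i, u i * v i

def IsStar {n : ℕ} (C : Submodule (ZMod 2) (Word n)) (α : Word n) : Prop :=
  α ∈ C ∧ α ≠ 0 ∧ α ≠ 1

structure CodeAlgebra (F : Type*) [Field F] {n : ℕ} (C : Submodule (ZMod 2) (Word n))
    (a : Fin n → Word n → F) (b : Word n → Word n → F) (c : Fin n → Word n → F)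
    (A : Type*) [AddCommGroup A] [Module F A] where
  mul : A →ₗ[F] A →ₗ[F] A
  t : Fin n → A
  e : Word n → A
  bas : Module.Basis (Fin n ⊕ {α : Word n // IsStar C α}) F A
  bas_t : ∀ i, bas (Sum.inl i) = t i
  bas_e : ∀ α, bas (Sum.inr α) = e α.1
  mul_comm : ∀ x y : A, mul x y = mul y x
  t_mul_t : ∀ i j, mul (t i) (t j) = if i = j then t i else 0
  t_mul_e : ∀ (i : Fin n) (α : Word n), IsStar C α →
    mul (t i) (e α) = if α i = 1 then a i α • e α else 0
  e_mul_e : ∀ (α β : Word n), IsStar C α → IsStar C β → α ≠ β → α + β ≠ 1 →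
    mul (e α) (e β) = b α β • e (α + β)
  e_mul_self : ∀ (α : Word n), IsStar C α →
    mul (e α) (e α) = ∑ i ∈ wsupp α, c i α • t i
  e_mul_compl : ∀ (α β : Word n), IsStar C α → IsStar C β → α + β = 1 →
    mul (e α) (e β) = 0

def Nondeg {F : Type*} [Field F] {n : ℕ} (C : Submodule (ZMod 2) (Word n))
    (a : Fin n → Word n → F) (b : Word n → Word n → F) (c : Fin n → Word n → F) : Prop :=
  (∀ i : Fin n, ∃ α ∈ C, α i = 1) ∧ (∃ α, IsStar C α) ∧
  (∀ i α, IsStar C α → α i = 1 → a i α ≠ 0) ∧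
  (∀ α β, IsStar C α → IsStar C β → α ≠ β → α + β ≠ 1 → b α β ≠ 0) ∧
  (∀ i α, IsStar C α → α i = 1 → c i α ≠ 0)



lemma zmod2_eq_zero_of_ne_one {x : ZMod 2} (h : x ≠ 1) : x = 0 := by revert h; revert x; decide

lemma word_add_iff {n : ℕ} (α β γ : Word n) : α + β = γ ↔ α = β + γ := by
  rw [funext_iff, funext_iff]
  refine forall_congr' fun i => ?_
  have h : ∀ x y z : ZMod 2, x + y = z ↔ x = y + z := by decide
  exact h (α i) (β i) (γ i)

lemma word_add_eq_zero_iff {n : ℕ} {α β : Word n} : α + β = 0 ↔ α = β := by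
  rw [word_add_iff]; simp

lemma word_exists_one {n : ℕ} {α : Word n} (h : α ≠ 0) : ∃ i, α i = 1 := by
  by_contra hc
  push_neg at hc
  exact h (funext fun i => zmod2_eq_zero_of_ne_one (hc i))

lemma word_ne_ex {n : ℕ} {α β : Word n} (h : α ≠ β) : ∃ j, α j ≠ β j :=
  Function.ne_iff.mp h

lemma word_self_add {n : ℕ} (β : Word n) : β + β = 0 := word_add_eq_zero_iff.mpr rfl

section FrobLemmas

variable {F : Type*} [Field F] {n : ℕ}
    {C : Submodule (ZMod 2) (Word n)}
    {a : Fin n → Word n → F} {b : Word n → Word n → F} {c : Fin n → Word n → F}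
    {A : Type*} [AddCommGroup A] [Module F A]
    (CA : CodeAlgebra F C a b c A)
    (B : A →ₗ[F] A →ₗ[F] F)
    (hF : ∀ x y z : A, B x (CA.mul y z) = B (CA.mul x y) z)

omit [Field F] in
lemma isStar_add {α β : Word n} (hα : IsStar C α) (hβ : IsStar C β)
    (hne : α ≠ β) (h1 : α + β ≠ 1) : IsStar C (α + β) :=
  ⟨C.add_mem hα.1 hβ.1, fun h => hne (word_add_eq_zero_iff.mp h), h1⟩

include hF

/-- off-diagonal t-t values vanish -/
lemma frob_tt (hnd : Nondeg C a b c) {i j : Fin n} (h : i ≠ j) :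
    B (CA.t i) (CA.t j) = 0 := by
  have key := hF (CA.t i) (CA.t j) (CA.t j)
  rw [CA.t_mul_t, CA.t_mul_t, if_pos rfl, if_neg h] at key
  simpa using key

/-- off-diagonal e-e values vanish -/
lemma frob_ee_ne (hnd : Nondeg C a b c) {α β : Word n} (hα : IsStar C α)
    (hβ : IsStar C β) (hne : α ≠ β) : B (CA.e α) (CA.e β) = 0 := by
  obtain ⟨j, hj⟩ := word_ne_ex hne
  have key := hF (CA.e α) (CA.t j) (CA.e β)
  rw [CA.mul_comm (CA.e α) (CA.t j), CA.t_mul_e j α hα, CA.t_mul_e j β hβ] at key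
  rcases eq_or_ne (α j) 1 with h1 | h1
  · have h2 : β j ≠ 1 := fun hh => hj (h1.trans hh.symm)
    rw [if_neg h2, if_pos h1] at key
    simp only [map_zero, LinearMap.smul_apply, map_smul, smul_eq_mul] at key
    exact (mul_eq_zero.mp key.symm).resolve_left (hnd.2.2.1 j α hα h1)
  · have h2 : β j = 1 := by
      rcases eq_or_ne (β j) 1 with h | h
      · exact h
      · exact absurd ((zmod2_eq_zero_of_ne_one h1).trans (zmod2_eq_zero_of_ne_one h).symm) hj
    rw [if_pos h2, if_neg h1] at key
    simp only [map_smul, smul_eq_mul, LinearMap.zero_apply, map_zero] at key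
    exact (mul_eq_zero.mp key).resolve_left (hnd.2.2.1 j β hβ h2)

omit hF B in
/-- in the non-exceptional situation, there is a codeword outside {0,1,α,1+α} -/
lemma exists_outside (hnd : Nondeg C a b c)
    (hexc : ¬ ∃ α : Word n, IsStar C α ∧ (C : Set (Word n)) = {0, 1, α, 1 + α} ∧
      (wsupp α).card = 1 ∧ (∀ i, α i = 1 → a i α = 1))
    {α : Word n} (hα : IsStar C α) {i : Fin n} (hi : α i = 1)
    (hsupp : ∀ j, α j = 1 → j = i) (ha : a i α = 1) :
    ∃ β, IsStar C β ∧ β ≠ α ∧ β ≠ 1 + α := by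
  by_contra hc
  push_neg at hc
  have hsub : ∀ β ∈ C, β = 0 ∨ β = 1 ∨ β = α ∨ β = 1 + α := by
    intro β hβ
    by_contra hb
    push_neg at hb
    exact hb.2.2.2 (hc β ⟨hβ, hb.1, hb.2.1⟩ (hb.2.2.1))
  by_cases hone : (1 : Word n) ∈ C
  · apply hexc
    refine ⟨α, hα, ?_, ?_, ?_⟩
    · apply Set.eq_of_subset_of_subset
      · intro β hβ
        rcases hsub β hβ with h | h | h | h <;> simp [h]
      · intro β hβ
        simp only [Set.mem_insert_iff, Set.mem_singleton_iff] at hβ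
        rcases hβ with h | h | h | h <;> subst h
        · exact C.zero_mem
        · exact hone
        · exact hα.1
        · exact C.add_mem hone hα.1
    · have : wsupp α = {i} := by
        ext j
        simp only [wsupp, Finset.mem_filter, Finset.mem_univ, true_and, Finset.mem_singleton]
        exact ⟨fun h => hsupp j h, fun h => h ▸ hi⟩
      rw [this, Finset.card_singleton]
    · intro j hj
      rw [hsupp j hj]; exact ha
  · -- 1 ∉ C: then 1+α ∉ C, so C ⊆ {0, α}, contradicting nondegeneracy
    have hca : (1 : Word n) + α ∉ C := fun h => by
      have : (1 : Word n) = (1 + α) + α := by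
        have h2 : α + α = 0 := word_add_eq_zero_iff.mpr rfl
        rw [add_assoc, h2, add_zero]
      exact hone (this ▸ C.add_mem h hα.1)
    have hsub2 : ∀ β ∈ C, β = 0 ∨ β = α := by
      intro β hβ
      rcases hsub β hβ with h | h | h | h
      · exact Or.inl h
      · exact absurd (h ▸ hβ) hone
      · exact Or.inr h
      · exact absurd (h ▸ hβ) hca
    -- find j ≠ i
    obtain ⟨j, hj⟩ := word_ne_ex hα.2.2
    have hj0 : α j = 0 := zmod2_eq_zero_of_ne_one (by simpa using hj)
    obtain ⟨γ, hγC, hγj⟩ := hnd.1 j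
    rcases hsub2 γ hγC with h | h
    · simp [h] at hγj
    · subst h
      rw [hsupp j hγj] at hj0
      rw [hi] at hj0
      exact one_ne_zero hj0

/-- t-e values vanish -/
lemma frob_te (hnd : Nondeg C a b c)
    (hexc : ¬ ∃ α : Word n, IsStar C α ∧ (C : Set (Word n)) = {0, 1, α, 1 + α} ∧
      (wsupp α).card = 1 ∧ (∀ i, α i = 1 → a i α = 1))
    {α : Word n} (hα : IsStar C α) (i : Fin n) :
    B (CA.t i) (CA.e α) = 0 ∧ B (CA.e α) (CA.t i) = 0 := by
  by_cases hcase : ∃ j, α j = 1 ∧ j ≠ i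
  · obtain ⟨j, hj1, hji⟩ := hcase
    constructor
    · have key := hF (CA.t i) (CA.t j) (CA.e α)
      rw [CA.t_mul_t, CA.t_mul_e j α hα, if_pos hj1, if_neg (Ne.symm hji)] at key
      simp only [map_smul, smul_eq_mul, map_zero, LinearMap.zero_apply] at key
      exact (mul_eq_zero.mp key).resolve_left (hnd.2.2.1 j α hα hj1)
    · have key := hF (CA.e α) (CA.t j) (CA.t i)
      rw [CA.t_mul_t, CA.mul_comm (CA.e α) (CA.t j), CA.t_mul_e j α hα,
        if_pos hj1, if_neg hji] at key
      simp only [map_zero, LinearMap.smul_apply, map_smul, smul_eq_mul] at key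
      exact (mul_eq_zero.mp key.symm).resolve_left (hnd.2.2.1 j α hα hj1)
  · push_neg at hcase
    have hsupp : ∀ j, α j = 1 → j = i := hcase
    have hi : α i = 1 := by
      obtain ⟨j, hj⟩ := word_exists_one hα.2.1
      exact (hsupp j hj) ▸ hj
    by_cases ha1 : a i α = 1
    · obtain ⟨β, hβ, hβα, hβcα⟩ := exists_outside hnd hexc hα hi hsupp ha1
      set γ : Word n := β + α with hγdef
      have hγ : IsStar C γ := by
        refine ⟨C.add_mem hβ.1 hα.1, fun h => hβα (word_add_eq_zero_iff.mp h), fun h => ?_⟩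
        exact hβcα (by rw [word_add_iff] at h; rw [h, add_comm])
      have hβγ : β ≠ γ := fun h => hα.2.1 (by
        have := word_add_eq_zero_iff.mpr h
        rw [hγdef] at this
        have h2 : β + (β + α) = 0 := this
        rwa [← add_assoc, (word_add_eq_zero_iff.mpr (rfl : β = β)), zero_add] at h2)
      have hβγα : β + γ = α := by rw [hγdef, ← add_assoc, word_add_eq_zero_iff.mpr rfl, zero_add]
      have hβγ1 : β + γ ≠ 1 := hβγα ▸ hα.2.2
      have hmul : CA.mul (CA.e β) (CA.e γ) = b β γ • CA.e α := by
        rw [CA.e_mul_e β γ hβ hγ hβγ hβγ1, hβγα]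
      have hbne : b β γ ≠ 0 := hnd.2.2.2.1 β γ hβ hγ hβγ hβγ1
      have hee : B (CA.e β) (CA.e γ) = 0 := frob_ee_ne CA B hF hnd hβ hγ hβγ
      constructor
      · have key := hF (CA.t i) (CA.e β) (CA.e γ)
        rw [hmul, CA.t_mul_e i β hβ] at key
        simp only [map_smul, smul_eq_mul] at key
        rcases eq_or_ne (β i) 1 with h | h
        · rw [if_pos h] at key
          simp only [map_smul, LinearMap.smul_apply, smul_eq_mul, hee, mul_zero] at key
          exact (mul_eq_zero.mp key).resolve_left hbne
        · rw [if_neg h] at key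
          simp only [map_zero, LinearMap.zero_apply] at key
          exact (mul_eq_zero.mp key).resolve_left hbne
      · have key := hF (CA.e β) (CA.e γ) (CA.t i)
        rw [CA.mul_comm (CA.e γ) (CA.t i), CA.t_mul_e i γ hγ, hmul] at key
        simp only [LinearMap.smul_apply, map_smul, smul_eq_mul] at key
        rcases eq_or_ne (γ i) 1 with h | h
        · rw [if_pos h] at key
          simp only [map_smul, smul_eq_mul, hee, mul_zero] at key
          exact (mul_eq_zero.mp key.symm).resolve_left hbne
        · rw [if_neg h] at key
          simp only [map_zero] at key
          exact (mul_eq_zero.mp key.symm).resolve_left hbne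
    · constructor
      · have key := hF (CA.t i) (CA.t i) (CA.e α)
        rw [CA.t_mul_t, CA.t_mul_e i α hα, if_pos rfl, if_pos hi] at key
        simp only [map_smul, smul_eq_mul] at key
        have : (a i α - 1) * B (CA.t i) (CA.e α) = 0 := by
          rw [sub_mul, one_mul, key, sub_self]
        exact (mul_eq_zero.mp this).resolve_left (sub_ne_zero.mpr ha1)
      · have key := hF (CA.e α) (CA.t i) (CA.t i)
        rw [CA.t_mul_t, CA.mul_comm (CA.e α) (CA.t i), CA.t_mul_e i α hα,
          if_pos rfl, if_pos hi] at key
        simp only [LinearMap.smul_apply, map_smul, smul_eq_mul] at key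
        have : (a i α - 1) * B (CA.e α) (CA.t i) = 0 := by
          rw [sub_mul, one_mul, ← key, sub_self]
        exact (mul_eq_zero.mp this).resolve_left (sub_ne_zero.mpr ha1)

/-- diagonal e-e values -/
lemma frob_ee_diag (hnd : Nondeg C a b c) {α : Word n} (hα : IsStar C α)
    {i : Fin n} (hi : α i = 1) :
    B (CA.e α) (CA.e α) = c i α / a i α * B (CA.t i) (CA.t i) := by
  have key := hF (CA.t i) (CA.e α) (CA.e α)
  rw [CA.e_mul_self α hα, CA.t_mul_e i α hα, if_pos hi] at key
  simp only [map_sum, map_smul, smul_eq_mul, LinearMap.smul_apply] at key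
  have hsum : ∑ j ∈ wsupp α, c j α * B (CA.t i) (CA.t j) = c i α * B (CA.t i) (CA.t i) := by
    rw [Finset.sum_eq_single i]
    · intro j _ hj
      rw [frob_tt CA B hF hnd (Ne.symm hj), mul_zero]
    · intro h
      exact absurd (by simp [wsupp, hi]) h
  rw [hsum] at key
  have hane : a i α ≠ 0 := hnd.2.2.1 i α hα hi
  field_simp
  rw [mul_comm (B (CA.e α) (CA.e α)) (a i α), ← key, mul_comm]

end FrobLemmas

section Constr

variable {F : Type*} [Field F] {n : ℕ}

noncomputable def lamE (a c : Fin n → Word n → F) (lam : Fin n → F) (α : Word n) : F :=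
  if h : ∃ i, α i = 1 then c h.choose α / a h.choose α * lam h.choose else 0

variable {C : Submodule (ZMod 2) (Word n)}

lemma lamE_eq {a c : Fin n → Word n → F} {lam : Fin n → F}
    (h1 : ∀ α, IsStar C α → ∀ i j, α i = 1 → α j = 1 →
      c i α / a i α * lam i = c j α / a j α * lam j)
    {α : Word n} (hα : IsStar C α) {i : Fin n} (hi : α i = 1) :
    lamE a c lam α = c i α / a i α * lam i := by
  have hex : ∃ j, α j = 1 := ⟨i, hi⟩
  rw [lamE, dif_pos hex]
  exact h1 α hα _ i hex.choose_spec hi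

noncomputable def frVal (a c : Fin n → Word n → F) (lam : Fin n → F) :
    (Fin n ⊕ {α : Word n // IsStar C α}) → (Fin n ⊕ {α : Word n // IsStar C α}) → F
  | .inl i, .inl j => if i = j then lam i else 0
  | .inl _, .inr _ => 0
  | .inr _, .inl _ => 0
  | .inr α, .inr β => if α.1 = β.1 then lamE a c lam α.1 else 0

end Constr

section KeyCases

variable {F : Type*} [Field F] {n : ℕ}
    {C : Submodule (ZMod 2) (Word n)}
    {a : Fin n → Word n → F} {b : Word n → Word n → F} {c : Fin n → Word n → F}
    {A : Type*} [AddCommGroup A] [Module F A]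
    (CA : CodeAlgebra F C a b c A)

lemma key_cases (hnd : Nondeg C a b c) {lam : Fin n → F}
    (h1 : ∀ α, IsStar C α → ∀ i j, α i = 1 → α j = 1 →
      c i α / a i α * lam i = c j α / a j α * lam j)
    (h2 : ∀ α β γ, IsStar C α → IsStar C β → IsStar C γ → α + β = γ →
      ∀ i j k, α i = 1 → β j = 1 → γ k = 1 →
        b α β * (c k γ / a k γ * lam k) = b α γ * (c j β / a j β * lam j) ∧
        b α γ * (c j β / a j β * lam j) = b β γ * (c i α / a i α * lam i))
    (B : A →ₗ[F] A →ₗ[F] F)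
    (Btt : ∀ i j, B (CA.t i) (CA.t j) = if i = j then lam i else 0)
    (Bte : ∀ (i : Fin n) (α : Word n), IsStar C α → B (CA.t i) (CA.e α) = 0)
    (Bet : ∀ (α : Word n) (i : Fin n), IsStar C α → B (CA.e α) (CA.t i) = 0)
    (Bee : ∀ α β : Word n, IsStar C α → IsStar C β →
      B (CA.e α) (CA.e β) = if α = β then lamE a c lam α else 0) :
    ∀ u v w : Fin n ⊕ {α : Word n // IsStar C α},
      B (CA.bas u) (CA.mul (CA.bas v) (CA.bas w)) =
        B (CA.mul (CA.bas u) (CA.bas v)) (CA.bas w) := by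
  -- helper: B x of a sum of c j • t j against e γ vanishes, and similar
  rintro (i | ⟨α, hα⟩) (j | ⟨β, hβ⟩) (k | ⟨γ, hγ⟩) <;>
    simp only [CA.bas_t, CA.bas_e]
  · -- t t t
    rw [CA.t_mul_t j k, CA.t_mul_t i j]
    by_cases hjk : j = k <;> by_cases hij : i = j <;>
      simp [hjk, hij, Btt] <;> simp_all [Btt]
  · -- t t e
    rw [CA.t_mul_t i j, CA.t_mul_e j γ hγ]
    by_cases hij : i = j <;> by_cases hj : γ j = 1 <;>
      simp [hij, hj, Bte _ _ hγ]
  · -- t e t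
    rw [CA.mul_comm (CA.e β) (CA.t k), CA.t_mul_e k β hβ, CA.t_mul_e i β hβ]
    by_cases hk : β k = 1 <;> by_cases hi : β i = 1 <;>
      simp [hk, hi, Bte _ _ hβ, Bet _ _ hβ]
  · -- t e e
    by_cases hbc : β = γ
    · subst hbc
      rw [CA.e_mul_self β hβ, CA.t_mul_e i β hβ]
      have hL : (B (CA.t i)) (∑ j ∈ wsupp β, c j β • CA.t j)
          = if β i = 1 then c i β * lam i else 0 := by
        rw [map_sum]
        simp only [map_smul, smul_eq_mul, Btt]
        rw [Finset.sum_congr rfl (fun j _ => by rw [mul_ite, mul_zero]),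
          Finset.sum_ite_eq (wsupp β) i (fun j => c j β * lam i)]
        simp [wsupp]
      rw [hL]
      by_cases hi : β i = 1
      · rw [if_pos hi, if_pos hi]
        simp only [map_smul, LinearMap.smul_apply, smul_eq_mul, Bee β β hβ hβ, if_pos rfl, ite_true]
        rw [lamE_eq h1 hβ hi]
        have hane : a i β ≠ 0 := hnd.2.2.1 i β hβ hi
        field_simp
      · simp [hi]
    · by_cases hbc1 : β + γ = 1
      · rw [CA.e_mul_compl β γ hβ hγ hbc1, CA.t_mul_e i β hβ]
        by_cases hi : β i = 1 <;> simp [hi, Bee β γ hβ hγ, hbc]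
      · rw [CA.e_mul_e β γ hβ hγ hbc hbc1, CA.t_mul_e i β hβ]
        have hst := isStar_add hβ hγ hbc hbc1 (C := C)
        by_cases hi : β i = 1 <;>
          simp [hi, Bte _ _ hst, Bee β γ hβ hγ, hbc]
  · -- e t t
    rw [CA.t_mul_t j k, CA.mul_comm (CA.e α) (CA.t j), CA.t_mul_e j α hα]
    by_cases hjk : j = k
    · subst hjk
      by_cases hj : α j = 1 <;> simp [hj, Bet _ _ hα]
    · by_cases hj : α j = 1 <;> simp [hjk, hj, Bet _ _ hα]
  · -- e t e
    rw [CA.mul_comm (CA.e α) (CA.t j)]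
    by_cases hac : α = γ
    · subst hac
      rw [CA.t_mul_e j α hα]
      by_cases hj : α j = 1 <;> simp [hj]
    · rw [CA.t_mul_e j γ hγ, CA.t_mul_e j α hα]
      by_cases hjγ : γ j = 1 <;> by_cases hjα : α j = 1 <;>
        simp [hjγ, hjα, Bee α γ hα hγ, hac]
  · -- e e t
    rw [CA.mul_comm (CA.e β) (CA.t k), CA.t_mul_e k β hβ]
    by_cases hab : α = β
    · subst hab
      rw [CA.e_mul_self α hα]
      have hR : (B (∑ j ∈ wsupp α, c j α • CA.t j)) (CA.t k)
          = if α k = 1 then c k α * lam k else 0 := by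
        rw [map_sum]
        simp only [LinearMap.coe_sum, Finset.sum_apply, map_smul, LinearMap.smul_apply,
          smul_eq_mul, Btt]
        rw [Finset.sum_congr rfl (fun j _ => by rw [mul_ite, mul_zero]),
          Finset.sum_ite_eq' (wsupp α) k (fun j => c j α * lam j)]
        simp [wsupp]
      rw [hR]
      by_cases hk : α k = 1
      · rw [if_pos hk, if_pos hk]
        simp only [map_smul, smul_eq_mul, Bee α α hα hα, if_pos rfl, ite_true]
        rw [lamE_eq h1 hα hk]
        have hane : a k α ≠ 0 := hnd.2.2.1 k α hα hk
        field_simp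
      · simp [hk]
    · by_cases hab1 : α + β = 1
      · rw [CA.e_mul_compl α β hα hβ hab1]
        by_cases hk : β k = 1 <;> simp [hk, Bee α β hα hβ, hab]
      · rw [CA.e_mul_e α β hα hβ hab hab1]
        have hst := isStar_add hα hβ hab hab1 (C := C)
        by_cases hk : β k = 1 <;>
          simp [hk, Bet _ _ hst, Bee α β hα hβ, hab]
  · -- e e e
    by_cases hbc : β = γ
    · subst hbc
      rw [CA.e_mul_self β hβ]
      have hL : (B (CA.e α)) (∑ j ∈ wsupp β, c j β • CA.t j) = 0 := by
        rw [map_sum]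
        simp [Bet _ _ hα]
      rw [hL]
      by_cases hab : α = β
      · subst hab
        rw [CA.e_mul_self α hα, map_sum]
        simp [Bte _ _ hα]
      · by_cases hab1 : α + β = 1
        · rw [CA.e_mul_compl α β hα hβ hab1]; simp
        · rw [CA.e_mul_e α β hα hβ hab hab1]
          have hst := isStar_add hα hβ hab hab1 (C := C)
          have hne : α + β ≠ β := fun h => hα.2.1 (by
            rw [word_add_iff] at h
            rwa [word_self_add] at h)
          simp [Bee (α + β) β hst hβ, hne]
    · by_cases hbc1 : β + γ = 1
      · rw [CA.e_mul_compl β γ hβ hγ hbc1]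
        simp only [map_zero]
        by_cases hab : α = β
        · subst hab
          rw [CA.e_mul_self α hα, map_sum]
          simp [Bte _ _ hγ]
        · by_cases hab1 : α + β = 1
          · rw [CA.e_mul_compl α β hα hβ hab1]; simp
          · rw [CA.e_mul_e α β hα hβ hab hab1]
            have hst := isStar_add hα hβ hab hab1 (C := C)
            have hne : α + β ≠ γ := fun h => by
              rw [word_add_iff] at h
              rw [hbc1] at h
              exact hα.2.2 h
            simp [Bee (α + β) γ hst hγ, hne]
      · rw [CA.e_mul_e β γ hβ hγ hbc hbc1]
        have hstβγ := isStar_add hβ hγ hbc hbc1 (C := C)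
        simp only [map_smul, smul_eq_mul]
        by_cases hab : α = β
        · subst hab
          rw [CA.e_mul_self α hα, map_sum]
          have hne : α ≠ α + γ := fun h => hγ.2.1 (by
            have h2 := congrArg (α + ·) h
            rw [← add_assoc, word_self_add, zero_add] at h2
            exact h2.symm)
          simp [Bte _ _ hγ, Bee α (α + γ) hα hstβγ, hne]
        · by_cases hab1 : α + β = 1
          · rw [CA.e_mul_compl α β hα hβ hab1]
            have hne : α ≠ β + γ := fun h => hγ.2.2 (by
              have h2 : α + β = γ := (word_add_iff α β γ).mpr h
              exact h2.symm.trans hab1)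
            simp [Bee α (β + γ) hα hstβγ, hne]
          · rw [CA.e_mul_e α β hα hβ hab hab1]
            have hstαβ := isStar_add hα hβ hab hab1 (C := C)
            simp only [map_smul, LinearMap.smul_apply, smul_eq_mul,
              Bee α (β + γ) hα hstβγ, Bee (α + β) γ hstαβ hγ]
            by_cases heq : α = β + γ
            · have heq2 : α + β = γ := (word_add_iff α β γ).mpr heq
              rw [if_pos heq, if_pos heq2]
              obtain ⟨i, hi⟩ := word_exists_one hα.2.1
              obtain ⟨j, hj⟩ := word_exists_one hβ.2.1
              obtain ⟨k, hk⟩ := word_exists_one hγ.2.1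
              obtain ⟨E1, E2⟩ := h2 α β γ hα hβ hγ heq2 i j k hi hj hk
              rw [lamE_eq h1 hα hi, heq2, lamE_eq h1 hγ hk]
              rw [← E2, E1]
            · have heq2 : α + β ≠ γ := fun h => heq ((word_add_iff α β γ).mp h)
              rw [if_neg heq, if_neg heq2]
              simp
      
end KeyCases

/-- Theorem 3.20: existence and uniqueness of a Frobenius form on a non-degenerate code
algebra (excluding the exceptional case). -/
theorem frobenius_form_characterisation {F : Type*} [Field F] {n : ℕ}
    {C : Submodule (ZMod 2) (Word n)}
    {a : Fin n → Word n → F} {b : Word n → Word n → F} {c : Fin n → Word n → F}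
    {A : Type*} [AddCommGroup A] [Module F A]
    (CA : CodeAlgebra F C a b c A)
    (hnd : Nondeg C a b c)
    (hexc : ¬ ∃ α : Word n, IsStar C α ∧ (C : Set (Word n)) = {0, 1, α, 1 + α} ∧
      (wsupp α).card = 1 ∧ (∀ i, α i = 1 → a i α = 1)) :
    -- existence criterion
    ((∃ B : A →ₗ[F] A →ₗ[F] F, B ≠ 0 ∧
        ∀ x y z : A, B x (CA.mul y z) = B (CA.mul x y) z) ↔
      (∃ lam : Fin n → F, lam ≠ 0 ∧
        (∀ α, IsStar C α → ∀ i j, α i = 1 → α j = 1 →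
          c i α / a i α * lam i = c j α / a j α * lam j) ∧
        (∀ α β γ, IsStar C α → IsStar C β → IsStar C γ → α + β = γ →
          ∀ i j k, α i = 1 → β j = 1 → γ k = 1 →
            b α β * (c k γ / a k γ * lam k) = b α γ * (c j β / a j β * lam j) ∧
            b α γ * (c j β / a j β * lam j) = b β γ * (c i α / a i α * lam i)))) ∧
    -- the form is uniquely determined, diagonal, and given by the λᵢ
    (∀ B : A →ₗ[F] A →ₗ[F] F, B ≠ 0 →
      (∀ x y z : A, B x (CA.mul y z) = B (CA.mul x y) z) →
      ∃ lam : Fin n → F,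
        (∀ i j, B (CA.t i) (CA.t j) = if i = j then lam i else 0) ∧
        (∀ i α, IsStar C α → B (CA.t i) (CA.e α) = 0) ∧
        (∀ α β, IsStar C α → IsStar C β → α ≠ β → B (CA.e α) (CA.e β) = 0) ∧
        (∀ α i, IsStar C α → α i = 1 →
          B (CA.e α) (CA.e α) = c i α / a i α * lam i)) := by
  constructor
  · constructor
    · -- forward direction
      rintro ⟨B, hBne, hF⟩
      refine ⟨fun i => B (CA.t i) (CA.t i), ?_, ?_, ?_⟩
      · -- not all zero
        intro h0
        apply hBne
        have hz : ∀ i, B (CA.t i) (CA.t i) = 0 := fun i => by simpa using congrFun h0 i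
        refine CA.bas.ext fun u => ?_
        rw [LinearMap.zero_apply]
        refine CA.bas.ext fun v => ?_
        rw [LinearMap.zero_apply]
        rcases u with i | ⟨α, hα⟩ <;> rcases v with j | ⟨β, hβ⟩ <;>
          simp only [CA.bas_t, CA.bas_e]
        · by_cases h : i = j
          · subst h; exact hz i
          · exact frob_tt CA B hF hnd h
        · exact (frob_te CA B hF hnd hexc hβ i).1
        · exact (frob_te CA B hF hnd hexc hα j).2
        · by_cases h : α = β
          · subst h
            obtain ⟨i, hi⟩ := word_exists_one hα.2.1
            rw [frob_ee_diag CA B hF hnd hα hi, hz i, mul_zero]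
          · exact frob_ee_ne CA B hF hnd hα hβ h
      · -- condition (1)
        intro α hα i j hi hj
        show c i α / a i α * B (CA.t i) (CA.t i) = c j α / a j α * B (CA.t j) (CA.t j)
        rw [← frob_ee_diag CA B hF hnd hα hi, ← frob_ee_diag CA B hF hnd hα hj]
      · -- condition (2)
        intro α β γ hα hβ hγ hsum i j k hi hj hk
        have hβγ : β ≠ γ := by
          intro h
          rw [← h] at hsum
          rw [word_add_iff, word_self_add] at hsum
          exact hα.2.1 hsum
        have hβγα : β + γ = α := ((word_add_iff α β γ).mp hsum).symm
        have hβγ1 : β + γ ≠ 1 := by rw [hβγα]; exact hα.2.2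
        have hαβ : α ≠ β := by
          intro h
          rw [← h, word_self_add] at hsum
          exact hγ.2.1 hsum.symm
        have hαβ1 : α + β ≠ 1 := hsum ▸ hγ.2.2
        have hαγβ : α + γ = β := by
          rw [← hsum, ← add_assoc, word_self_add, zero_add]
        have hαγ : α ≠ γ := by
          intro h
          rw [← h, word_self_add] at hαγβ
          exact hβ.2.1 hαγβ.symm
        have hαγ1 : α + γ ≠ 1 := by rw [hαγβ]; exact hβ.2.2
        have EA : b β γ * B (CA.e α) (CA.e α) = b α β * B (CA.e γ) (CA.e γ) := by
          have key := hF (CA.e α) (CA.e β) (CA.e γ)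
          rw [CA.e_mul_e β γ hβ hγ hβγ hβγ1, hβγα,
            CA.e_mul_e α β hα hβ hαβ hαβ1, hsum] at key
          simpa using key
        have EB : b α γ * B (CA.e β) (CA.e β) = b α β * B (CA.e γ) (CA.e γ) := by
          have key := hF (CA.e β) (CA.e α) (CA.e γ)
          rw [CA.e_mul_e α γ hα hγ hαγ hαγ1, hαγβ,
            CA.mul_comm (CA.e β) (CA.e α), CA.e_mul_e α β hα hβ hαβ hαβ1, hsum] at key
          simpa using key
        constructor
        · show b α β * (c k γ / a k γ * B (CA.t k) (CA.t k)) =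
            b α γ * (c j β / a j β * B (CA.t j) (CA.t j))
          rw [← frob_ee_diag CA B hF hnd hγ hk, ← frob_ee_diag CA B hF hnd hβ hj]
          exact EB.symm
        · show b α γ * (c j β / a j β * B (CA.t j) (CA.t j)) =
            b β γ * (c i α / a i α * B (CA.t i) (CA.t i))
          rw [← frob_ee_diag CA B hF hnd hβ hj, ← frob_ee_diag CA B hF hnd hα hi]
          exact EB.trans EA.symm
    · -- reverse direction: construct the form
      rintro ⟨lam, hlam, h1, h2⟩
      let B : A →ₗ[F] A →ₗ[F] F :=
        CA.bas.constr F fun u => CA.bas.constr F (frVal (C := C) a c lam u)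
      have Bval : ∀ u v, B (CA.bas u) (CA.bas v) = frVal (C := C) a c lam u v := by
        intro u v
        have hBd : B = CA.bas.constr F fun u => CA.bas.constr F (frVal (C := C) a c lam u) :=
          rfl
        rw [hBd, Module.Basis.constr_basis, Module.Basis.constr_basis]
      have Btt : ∀ i j, B (CA.t i) (CA.t j) = if i = j then lam i else 0 := by
        intro i j
        rw [← CA.bas_t i, ← CA.bas_t j, Bval]
        rfl
      have Bte : ∀ (i : Fin n) (α : Word n), (hα : IsStar C α) → B (CA.t i) (CA.e α) = 0 := by
        intro i α hα
        rw [← CA.bas_t i, ← CA.bas_e ⟨α, hα⟩, Bval]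
        rfl
      have Bet : ∀ (α : Word n) (i : Fin n), IsStar C α → B (CA.e α) (CA.t i) = 0 := by
        intro α i hα
        rw [← CA.bas_t i, ← CA.bas_e ⟨α, hα⟩, Bval]
        rfl
      have Bee : ∀ α β : Word n, (hα : IsStar C α) → (hβ : IsStar C β) →
          B (CA.e α) (CA.e β) = if α = β then lamE a c lam α else 0 := by
        intro α β hα hβ
        rw [← CA.bas_e ⟨α, hα⟩, ← CA.bas_e ⟨β, hβ⟩, Bval]
        rfl
      have key := key_cases CA hnd h1 h2 B Btt Bte Bet Bee
      have e3 : ∀ u v (z : A), B (CA.bas u) (CA.mul (CA.bas v) z)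
          = B (CA.mul (CA.bas u) (CA.bas v)) z := by
        intro u v z
        have hext := CA.bas.ext (f₁ := (B (CA.bas u)).comp (CA.mul (CA.bas v)))
          (f₂ := B (CA.mul (CA.bas u) (CA.bas v))) (fun w => by simpa using key u v w)
        simpa using LinearMap.congr_fun hext z
      have e2 : ∀ u (y z : A), B (CA.bas u) (CA.mul y z)
          = B (CA.mul (CA.bas u) y) z := by
        intro u y z
        have hext := CA.bas.ext (f₁ := (B (CA.bas u)).comp (CA.mul.flip z))
          (f₂ := (B.flip z).comp (CA.mul (CA.bas u))) (fun v => by simpa using e3 u v z)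
        simpa using LinearMap.congr_fun hext y
      have e1 : ∀ x y z : A, B x (CA.mul y z) = B (CA.mul x y) z := by
        intro x y z
        have hext := CA.bas.ext (f₁ := B.flip (CA.mul y z))
          (f₂ := (B.flip z).comp (CA.mul.flip y)) (fun u => by simpa using e2 u y z)
        simpa using LinearMap.congr_fun hext x
      refine ⟨B, ?_, e1⟩
      intro hB0
      obtain ⟨i, hi⟩ := Function.ne_iff.mp hlam
      apply hi
      have : B (CA.t i) (CA.t i) = 0 := by rw [hB0]; rfl
      rw [Btt, if_pos rfl] at this
      simpa using this
  · -- uniqueness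
    intro B hBne hF
    refine ⟨fun i => B (CA.t i) (CA.t i), ?_, ?_, ?_, ?_⟩
    · intro i j
      by_cases h : i = j
      · subst h; rw [if_pos rfl]
      · rw [if_neg h]; exact frob_tt CA B hF hnd h
    · intro i α hα
      exact (frob_te CA B hF hnd hexc hα i).1
    · intro α β hα hβ hne
      exact frob_ee_ne CA B hF hnd hα hβ hne
    · intro α i hα hi
      exact frob_ee_diag CA B hF hnd hα hi
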